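/- Suppose Assumptions 1 and 5 hold, let m > 0 and R > 1, set π(R) = ∫₀^∞ max{0, mz − R} dΦ(z) (which is strictly positive under Assumption 1), and define g(z) = max{0, mz − R}/π(R) − 1. Let υ ∈ (0,1) (the survival probability) and c ∈ (0,1), and define ρ(ζ) = υ·∫₀^∞ (1 + c·g(z))^ζ dΦ(z) for ζ ≥ 0. Then ρ(ζ) is finite for every ζ ≥ 0, ρ(1) = υ < 1, ρ(ζ) → ∞ as ζ → ∞, and there exists a unique ζ* ∈ (1, ∞) with ρ(ζ*) = 1. (Proposition 6, core claim: the Pareto exponent equation has a unique solution exceeding 1; in the model c = 1 − βR in the fundamental regime G = 1 and c = 1 − β in the bubbly regime G > 1, and ζ* is the Pareto exponent of the stationary wealth distribution.) -/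

import Mathlib

open Filter Topology MeasureTheory

/-- **Assumption 1.** `Φ` (the law `μ` of productivity) is an absolutely continuous
cdf on `[0,∞)` with `Φ(z) < 1` for all `z` and a finite mean. -/
structure Assumption1 (μ : Measure ℝ) : Prop where
  prob : IsProbabilityMeasure μ
  supp : μ (Set.Iio 0) = 0
  absCont : μ ≪ MeasureTheory.volume
  lt_one : ∀ z : ℝ, μ (Set.Iic z) < 1
  finite_mean : Integrable id μ

/-- The cdf `Φ` of the productivity distribution `μ`. -/
noncomputable def Phi (μ : Measure ℝ) (z : ℝ) : ℝ := (μ (Set.Iic z)).toReal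

/-- The risk premium `π(R) = ∫ max{0, mz − R} dΦ(z)` on unlevered capital investment. -/
noncomputable def premium (μ : Measure ℝ) (m R : ℝ) : ℝ := ∫ z, max 0 (m * z - R) ∂μ

/-- The leverage threshold `λ̄ = ((1−β)/β)·(∫ max{mz−1, 0} dΦ(z))⁻¹`. -/
noncomputable def lamBar (β m : ℝ) (μ : Measure ℝ) : ℝ :=
  ((1 - β) / β) * (∫ z, max (m * z - 1) 0 ∂μ)⁻¹

/-- **Trend stationary equilibrium** of the two-sector large open economy with linear
technology `F(K,X) = mK + DX`: gross risk-free rate `R > 1`, growth rate `G > 0`,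
threshold `z̄ = R/m` with `Φ(z̄) > 1 − 1/λ`, and sequences of aggregate wealth,
capital, land price, and external savings satisfying the equilibrium conditions,
with `B_t/W_t → 0`. -/
structure TSE (μ : Measure ℝ) (β lam m D : ℝ)
    (R G : ℝ) (W K P B : ℕ → ℝ) : Prop where
  hR : 1 < R
  hG : 0 < G
  hthr : 1 - 1 / lam < Phi μ (R / m)
  hW : ∀ t, 0 < W t
  hP : ∀ t, 0 < P t
  price : ∀ t, R = (P (t + 1) + D) / P t
  growth : G = β * (R + lam * premium μ m R)
  Wdyn : ∀ t, W (t + 1) = G * W t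
  Kdyn : ∀ t, K (t + 1) = β * lam * W t * ∫ z in Set.Ioi (R / m), z ∂μ
  bond : ∀ t, P t + B t = β * (lam * Phi μ (R / m) + 1 - lam) * W t
  wealth : ∀ t, W (t + 1) = m * K (t + 1) + R * (P t + B t)
  hBW : Filter.Tendsto (fun t => B t / W t) Filter.atTop (nhds 0)

set_option maxHeartbeats 1000000 in
/-- **Proposition 6, core claim (Pareto exponent).** Under Assumptions 1 and 5
(thin tails), with `m > 0`, `R > 1`, `π(R) = ∫ max{0, mz − R} dΦ(z)` (strictly
positive), `g(z) = max{0, mz − R}/π(R) − 1`, survival probability `υ ∈ (0,1)` and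
`c ∈ (0,1)`: `ρ(ζ) = υ·∫ (1 + c·g(z))^ζ dΦ(z)` is finite for every `ζ ≥ 0`,
`ρ(1) = υ < 1`, `ρ(ζ) → ∞` as `ζ → ∞`, and there is a unique `ζ* ∈ (1, ∞)` with
`ρ(ζ*) = 1`. -/
theorem pareto_exponent_unique
    (μ : Measure ℝ) (hμ : Assumption1 μ)
    (hthin : ∀ j : ℕ, 1 ≤ j → Integrable (fun z : ℝ => z ^ j) μ)
    (m R : ℝ) (hm : 0 < m) (hR : 1 < R)
    (υ c : ℝ) (hυ : υ ∈ Set.Ioo (0 : ℝ) 1) (hc : c ∈ Set.Ioo (0 : ℝ) 1)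
    (g : ℝ → ℝ) (hg : ∀ z : ℝ, g z = max 0 (m * z - R) / premium μ m R - 1)
    (ρfun : ℝ → ℝ) (hρ : ∀ ζ : ℝ, ρfun ζ = υ * ∫ z, (1 + c * g z) ^ ζ ∂μ) :
    0 < premium μ m R ∧
    (∀ ζ : ℝ, 0 ≤ ζ → Integrable (fun z : ℝ => (1 + c * g z) ^ ζ) μ) ∧
    ρfun 1 = υ ∧
    Tendsto ρfun atTop atTop ∧
    ∃! ζ : ℝ, 1 < ζ ∧ ρfun ζ = 1 := by
  obtain ⟨hυ0, hυ1⟩ := hυ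
  obtain ⟨hc0, hc1⟩ := hc
  have hprob := hμ.prob
  -- tails have positive measure
  have htail : ∀ x : ℝ, 0 < μ (Set.Ioi x) := by
    intro x
    have h1 : μ (Set.Iic x)ᶜ = 1 - μ (Set.Iic x) := by
      rw [measure_compl measurableSet_Iic (measure_ne_top μ _), measure_univ]
    rw [Set.compl_Iic] at h1
    rw [h1]
    exact tsub_pos_of_lt (hμ.lt_one x)
  -- integrability of the payoff
  have hmax_cont : Continuous fun z : ℝ => max 0 (m * z - R) :=
    continuous_const.max (by continuity)
  have hmax_int : Integrable (fun z : ℝ => max 0 (m * z - R)) μ := by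
    have hb : Integrable (fun z : ℝ => m * |z| + R) μ :=
      (hμ.finite_mean.abs.const_mul m).add (integrable_const R)
    refine hb.mono' hmax_cont.aestronglyMeasurable (Filter.Eventually.of_forall fun z => ?_)
    rw [Real.norm_eq_abs, abs_of_nonneg (le_max_left _ _)]
    rcases le_or_gt (m * z - R) 0 with h | h
    · rw [max_eq_left h]; nlinarith [abs_nonneg z, hm.le]
    · rw [max_eq_right h.le]; nlinarith [le_abs_self z, hm.le]
  -- positivity of the premium
  have hpre : 0 < premium μ m R := by
    have hnn : (0 : ℝ → ℝ) ≤ fun z => max 0 (m * z - R) := fun z => le_max_left _ _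
    rw [premium]
    refine (integral_pos_iff_support_of_nonneg hnn hmax_int).mpr ?_
    refine lt_of_lt_of_le (htail (R / m)) (measure_mono ?_)
    intro z hz
    simp only [Set.mem_Ioi] at hz
    have hmz : 0 < m * z - R := by
      have := (div_lt_iff₀ hm).mp hz; nlinarith
    exact (lt_max_iff.mpr (Or.inr hmz)).ne'
  set P := premium μ m R with hPdef
  have hPint : ∫ z, max 0 (m * z - R) ∂μ = P := rfl
  have h1c : 0 < 1 - c := by linarith
  have hb_eq : ∀ z, 1 + c * g z = (1 - c) + c * (max 0 (m * z - R) / P) := by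
    intro z; rw [hg z]; ring
  have hb_lb : ∀ z, 1 - c ≤ 1 + c * g z := by
    intro z
    rw [hb_eq z]
    have h0 : 0 ≤ max 0 (m * z - R) / P := div_nonneg (le_max_left _ _) hpre.le
    nlinarith
  have hb_pos : ∀ z, 0 < 1 + c * g z := fun z => lt_of_lt_of_le h1c (hb_lb z)
  have hbfun : (fun z => 1 + c * g z) = fun z => (1 - c) + c * (max 0 (m * z - R) / P) :=
    funext hb_eq
  have hb_cont : Continuous fun z : ℝ => 1 + c * g z := by
    rw [hbfun]
    exact continuous_const.add (continuous_const.mul (hmax_cont.div_const P))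
  -- upper bound K * (1 + |z|)
  set K : ℝ := 1 + (m + R) / P with hKdef
  have hK1 : (1 : ℝ) ≤ K := by
    rw [hKdef]
    have : 0 ≤ (m + R) / P := div_nonneg (by linarith) hpre.le
    linarith
  have hb_ub : ∀ z, 1 + c * g z ≤ K * (1 + |z|) := by
    intro z
    rw [hb_eq z, hKdef]
    have hmax_le : max 0 (m * z - R) ≤ m * |z| + R := by
      rcases le_or_gt (m * z - R) 0 with h | h
      · rw [max_eq_left h]; nlinarith [abs_nonneg z, hm.le]
      · rw [max_eq_right h.le]; nlinarith [le_abs_self z, hm.le]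
    have h1 : max 0 (m * z - R) / P ≤ (m * |z| + R) / P :=
      (div_le_div_iff_of_pos_right hpre).mpr hmax_le
    have h2 : (m * |z| + R) / P ≤ ((m + R) * (1 + |z|)) / P :=
      (div_le_div_iff_of_pos_right hpre).mpr (by nlinarith [abs_nonneg z, hm.le])
    have h0 : 0 ≤ max 0 (m * z - R) / P := div_nonneg (le_max_left _ _) hpre.le
    have hc' : c * (max 0 (m * z - R) / P) ≤ max 0 (m * z - R) / P := by nlinarith
    have hrhs : (1 + (m + R) / P) * (1 + |z|) = (1 + |z|) + ((m + R) * (1 + |z|)) / P := by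
      field_simp
    have habs := abs_nonneg z
    nlinarith [h1, h2, hc', habs]
  -- integrability of (1 + c g)^ζ for every real ζ
  have hint : ∀ ζ : ℝ, Integrable (fun z : ℝ => (1 + c * g z) ^ ζ) μ := by
    intro ζ
    obtain ⟨n0, hn0⟩ := exists_nat_ge |ζ|
    set N : ℕ := n0 + 1 with hNdef
    have hn : |ζ| ≤ (N : ℝ) := by
      rw [hNdef]; push_cast; linarith
    have hNpos : (0 : ℝ) < N := by positivity
    have habs : Integrable (fun z : ℝ => |z| ^ N) μ := by
      simpa [abs_pow] using (hthin N (by omega)).abs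
    have hdom : Integrable
        (fun z : ℝ => (1 - c) ^ (-(N : ℝ)) + K ^ N * 2 ^ N * (1 + |z| ^ N)) μ :=
      (integrable_const _).add (((integrable_const 1).add habs).const_mul _)
    have hcontζ : Continuous fun z : ℝ => (1 + c * g z) ^ ζ :=
      hb_cont.rpow_const fun z => Or.inl (hb_pos z).ne'
    refine hdom.mono' hcontζ.aestronglyMeasurable (Filter.Eventually.of_forall fun z => ?_)
    rw [Real.norm_eq_abs, abs_of_nonneg (Real.rpow_nonneg (hb_pos z).le _)]
    have hKz : 0 ≤ 1 + |z| ^ N := by positivity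
    have hterm2 : (0:ℝ) ≤ K ^ N * 2 ^ N * (1 + |z| ^ N) := by positivity
    rcases le_or_gt (1 + c * g z) 1 with hb1 | hb1
    · have h1 : (1 + c * g z) ^ ζ ≤ (1 + c * g z) ^ (-(N : ℝ)) :=
        Real.rpow_le_rpow_of_exponent_ge (hb_pos z) hb1 (by linarith [(abs_le.mp hn).1])
      have h2 : (1 + c * g z) ^ (-(N : ℝ)) ≤ (1 - c) ^ (-(N : ℝ)) :=
        (Real.rpow_le_rpow_iff_of_neg (hb_pos z) h1c (neg_lt_zero.mpr hNpos)).mpr (hb_lb z)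
      linarith
    · have h1 : (1 + c * g z) ^ ζ ≤ (1 + c * g z) ^ ((N : ℝ)) :=
        Real.rpow_le_rpow_of_exponent_le hb1.le ((le_abs_self ζ).trans hn)
      rw [Real.rpow_natCast] at h1
      have h2 : (1 + c * g z) ^ N ≤ (K * (1 + |z|)) ^ N :=
        pow_le_pow_left₀ (hb_pos z).le (hb_ub z) N
      have h3 : (1 + |z|) ^ N ≤ 2 ^ N * (1 + |z| ^ N) := by
        have hm1 : (1:ℝ) + |z| ≤ 2 * max 1 |z| := by
          have := le_max_left (1:ℝ) |z|; have := le_max_right (1:ℝ) |z|; linarith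
        have hm2 : (max 1 |z|) ^ N ≤ 1 + |z| ^ N := by
          rcases le_total |z| 1 with h | h
          · rw [max_eq_left h, one_pow]; nlinarith [pow_nonneg (abs_nonneg z) N]
          · rw [max_eq_right h]; nlinarith [pow_nonneg (abs_nonneg z) N]
        calc (1 + |z|) ^ N ≤ (2 * max 1 |z|) ^ N :=
              pow_le_pow_left₀ (by positivity) hm1 N
          _ = 2 ^ N * (max 1 |z|) ^ N := mul_pow _ _ _
          _ ≤ 2 ^ N * (1 + |z| ^ N) := by
              have : (0:ℝ) ≤ 2 ^ N := by positivity
              nlinarith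
      have h4 : (K * (1 + |z|)) ^ N = K ^ N * (1 + |z|) ^ N := mul_pow _ _ _
      have h5 : K ^ N * (1 + |z|) ^ N ≤ K ^ N * (2 ^ N * (1 + |z| ^ N)) := by
        have hKN : (0:ℝ) ≤ K ^ N := by positivity
        nlinarith
      have h6 : (0:ℝ) ≤ (1 - c) ^ (-(N : ℝ)) := Real.rpow_nonneg h1c.le _
      calc (1 + c * g z) ^ ζ ≤ (1 + c * g z) ^ N := h1
        _ ≤ K ^ N * (2 ^ N * (1 + |z| ^ N)) := by rw [h4] at h2; linarith
        _ = K ^ N * 2 ^ N * (1 + |z| ^ N) := by ring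
        _ ≤ (1 - c) ^ (-(N : ℝ)) + K ^ N * 2 ^ N * (1 + |z| ^ N) := by linarith
  -- value at 1
  have hρ1 : ρfun 1 = υ := by
    rw [hρ 1]
    have hI : Integrable (fun z : ℝ => c * (max 0 (m * z - R) / P)) μ :=
      (hmax_int.div_const P).const_mul c
    have hintval : ∫ z, (1 + c * g z) ^ (1:ℝ) ∂μ = 1 := by
      simp_rw [Real.rpow_one, hb_eq]
      rw [integral_add (integrable_const _) hI, integral_const, probReal_univ,
        integral_const_mul, integral_div, hPint]
      simp only [ENNReal.toReal_one, one_smul, smul_eq_mul]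
      field_simp
      ring
    rw [hintval, mul_one]
  -- lower bound on a tail set and divergence
  set z1 : ℝ := (R + 2 * P / c) / m with hz1def
  set S : Set ℝ := Set.Ioi z1 with hSdef
  have hS : 0 < μ S := htail z1
  have hbig : ∀ z ∈ S, (2 : ℝ) ≤ 1 + c * g z := by
    intro z hz
    rw [hb_eq]
    have hz1' : z1 < z := hz
    have hmz : R + 2 * P / c < m * z := by
      have h := (div_lt_iff₀ hm).mp hz1'
      nlinarith
    have hPc : (0:ℝ) < 2 * P / c := by positivity
    rw [max_eq_right (by linarith)]
    have h3 : 2 * P ≤ c * (m * z - R) := by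
      have : 2 * P / c ≤ m * z - R := by linarith
      rw [div_le_iff₀ hc0] at this; nlinarith
    have h4 : 2 ≤ c * (m * z - R) / P := by rw [le_div_iff₀ hpre]; linarith
    have h5 : c * ((m * z - R) / P) = c * (m * z - R) / P := (mul_div_assoc _ _ _).symm
    rw [h5]; linarith
  have hε : 0 < (μ S).toReal := ENNReal.toReal_pos hS.ne' (measure_ne_top μ S)
  have hlow : ∀ ζ : ℝ, 0 ≤ ζ → (2:ℝ) ^ ζ * (μ S).toReal ≤ ∫ z, (1 + c * g z) ^ ζ ∂μ := by
    intro ζ hζ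
    have h1 : ∫ z in S, (1 + c * g z) ^ ζ ∂μ ≤ ∫ z, (1 + c * g z) ^ ζ ∂μ :=
      setIntegral_le_integral (hint ζ)
        (Filter.Eventually.of_forall fun z => Real.rpow_nonneg (hb_pos z).le ζ)
    have h2 : (2:ℝ) ^ ζ * (μ S).toReal ≤ ∫ z in S, (1 + c * g z) ^ ζ ∂μ := by
      have := setIntegral_ge_of_const_le measurableSet_Ioi (measure_ne_top μ S)
        (fun z hz => Real.rpow_le_rpow (by norm_num) (hbig z hz) hζ)
        ((hint ζ).integrableOn)
      rw [smul_eq_mul, mul_comm] at this; exact this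
    linarith
  have htend : Tendsto ρfun atTop atTop := by
    have h2exp : Tendsto (fun ζ : ℝ => (2:ℝ) ^ ζ) atTop atTop := by
      have : (fun ζ : ℝ => (2:ℝ) ^ ζ) = fun ζ => Real.exp (Real.log 2 * ζ) := by
        funext ζ; rw [Real.rpow_def_of_pos (by norm_num)]
      rw [this]
      exact Real.tendsto_exp_atTop.comp
        (Tendsto.const_mul_atTop (Real.log_pos (by norm_num)) tendsto_id)
    have hgrow : Tendsto (fun ζ : ℝ => υ * ((2:ℝ) ^ ζ * (μ S).toReal)) atTop atTop :=
      Tendsto.const_mul_atTop hυ0 (Tendsto.atTop_mul_const hε h2exp)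
    refine tendsto_atTop_mono' atTop ?_ hgrow
    filter_upwards [eventually_ge_atTop (0:ℝ)] with ζ hζ
    rw [hρ ζ]
    exact mul_le_mul_of_nonneg_left (hlow ζ hζ) hυ0.le
  -- convexity of ρ
  have hconv : ConvexOn ℝ Set.univ ρfun := by
    have hI : ConvexOn ℝ Set.univ fun ζ : ℝ => ∫ z, (1 + c * g z) ^ ζ ∂μ := by
      refine ⟨convex_univ, fun x _ y _ a t ha ht hat => ?_⟩
      simp only [smul_eq_mul]
      have hpt : ∀ z, (1 + c * g z) ^ (a * x + t * y) ≤
          a * (1 + c * g z) ^ x + t * (1 + c * g z) ^ y := by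
        intro z
        have hbz := (hb_pos z).le
        have heq : (1 + c * g z) ^ (a * x + t * y) =
            ((1 + c * g z) ^ x) ^ a * ((1 + c * g z) ^ y) ^ t := by
          rw [Real.rpow_add (hb_pos z), mul_comm a x, mul_comm t y,
            Real.rpow_mul hbz, Real.rpow_mul hbz]
        rw [heq]
        exact Real.geom_mean_le_arith_mean2_weighted ha ht
          (Real.rpow_nonneg hbz x) (Real.rpow_nonneg hbz y) hat
      calc ∫ z, (1 + c * g z) ^ (a * x + t * y) ∂μ
          ≤ ∫ z, (a * (1 + c * g z) ^ x + t * (1 + c * g z) ^ y) ∂μ :=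
            integral_mono (hint _) (((hint x).const_mul a).add ((hint y).const_mul t)) hpt
        _ = a * ∫ z, (1 + c * g z) ^ x ∂μ + t * ∫ z, (1 + c * g z) ^ y ∂μ := by
            rw [integral_add ((hint x).const_mul a) ((hint y).const_mul t),
              integral_const_mul, integral_const_mul]
    have h2 := hI.smul hυ0.le
    have hfun : ρfun = υ • fun ζ : ℝ => ∫ z, (1 + c * g z) ^ ζ ∂μ := by
      funext ζ; rw [hρ ζ]; simp [smul_eq_mul]
    rw [hfun]; exact h2
  have hcont : Continuous ρfun := by
    exact continuousOn_univ.mp (hconv.continuousOn isOpen_univ)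
  -- existence of a root
  obtain ⟨ζ2, h2big, hζ2⟩ :=
    ((htend.eventually_ge_atTop 2).and (eventually_ge_atTop (1:ℝ))).exists
  have hIVT := intermediate_value_Icc hζ2 hcont.continuousOn
  have h1mem : (1:ℝ) ∈ Set.Icc (ρfun 1) (ρfun ζ2) := ⟨by rw [hρ1]; linarith, by linarith⟩
  obtain ⟨ζs, hmem, hval⟩ := hIVT h1mem
  have hζs1 : 1 < ζs := by
    refine lt_of_le_of_ne hmem.1 fun h => ?_
    rw [← h] at hval
    rw [hρ1] at hval
    linarith
  -- uniqueness via convexity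
  have key : ∀ u v : ℝ, 1 < u → u < v → ρfun u = 1 → ρfun v = 1 → False := by
    intro u v hu huv h1 h2
    set a : ℝ := (v - u) / (v - 1) with hadef
    set t : ℝ := (u - 1) / (v - 1) with htdef
    have hv1 : (0:ℝ) < v - 1 := by linarith
    have ha : 0 < a := div_pos (by linarith) hv1
    have ht : 0 < t := div_pos (by linarith) hv1
    have hat : a + t = 1 := by
      rw [hadef, htdef, ← add_div]
      field_simp
      ring
    have hcomb : a • (1:ℝ) + t • v = u := by
      rw [hadef, htdef, smul_eq_mul, smul_eq_mul]
      field_simp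
      ring
    have hineq := hconv.2 (Set.mem_univ (1:ℝ)) (Set.mem_univ v) ha.le ht.le hat
    rw [hcomb] at hineq
    simp only [smul_eq_mul] at hineq
    rw [h1, h2, hρ1] at hineq
    nlinarith
  refine ⟨hpre, fun ζ _ => hint ζ, hρ1, htend, ζs, ⟨hζs1, hval⟩, ?_⟩
  rintro y ⟨hy1, hyval⟩
  rcases lt_trichotomy y ζs with h | h | h
  · exact (key y ζs hy1 h hyval hval).elim
  · exact h
  · exact (key ζs y hζs1 h hval hyval).elim
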